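/- Conditional false alarm control of the Bonferroni-based conformal OOD test: Let Q̂^1, ..., Q̂^K be conformal p-values from a calibration set of size n_cal, and let r^i := P(Q̂^i ≤ α/((1+ε)K) | T_cal) ~ Beta(a, b) with a = ⌊(n_cal+1)·α/((1+ε)K)⌋, b = n_cal+1−a. If I_{(1+ε)μ}(a,b) ≥ 1 − δ/K where μ = a/(a+b), then with probability at least 1 − δ over the calibration set, the conditional probability of declaring OOD when all null hypotheses are true is at most α. -/

import Mathlib

open MeasureTheory
open scoped ENNReal NNReal

/-- The Beta(a,b) distribution on ℝ, as a measure with the usual density on (0,1). -/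
noncomputable def betaMeasure (a b : ℝ) : Measure ℝ :=
  (volume.restrict (Set.Ioo (0:ℝ) 1)).withDensity
    (fun x => ENNReal.ofReal
      (x ^ (a - 1) * (1 - x) ^ (b - 1) * (Real.Gamma (a + b) / (Real.Gamma a * Real.Gamma b))))

/-- Conditional false alarm control of the Bonferroni-based conformal OOD test: with
probability at least 1−δ over the calibration set, the conditional probability of
declaring OOD (some conformal p-value ≤ α/((1+ε)K)) when all nulls are true is ≤ α. -/
theorem stmt18 {Ωc Ωt : Type*} [MeasurableSpace Ωc] [MeasurableSpace Ωt]
    (μc : Measure Ωc) [IsProbabilityMeasure μc]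
    (κ : Ωc → Measure Ωt) (hκ : ∀ ω, IsProbabilityMeasure (κ ω))
    (K n_cal : ℕ) (hK : 0 < K)
    (α δ ε : ℝ) (hα : 0 < α) (hδ : 0 < δ) (hε : 0 < ε)
    (Qhat : Fin K → Ωc → Ωt → ℝ)
    (a b : ℕ)
    (ha : (a : ℝ) = ⌊(n_cal + 1 : ℝ) * (α / ((1 + ε) * K))⌋)
    (hb : b = n_cal + 1 - a)
    (r : Fin K → Ωc → ℝ)
    (hr : ∀ i ω, r i ω = ((κ ω) {x | Qhat i ω x ≤ α / ((1 + ε) * K)}).toReal)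
    (hbeta : ∀ i : Fin K, μc.map (r i) = betaMeasure a b)
    (hI : 1 - δ / K ≤
      (betaMeasure a b (Set.Iic ((1 + ε) * ((a : ℝ) / (a + b))))).toReal) :
    ENNReal.ofReal (1 - δ) ≤ μc {ω |
      (κ ω) {x | ∃ i : Fin K, Qhat i ω x ≤ α / ((1 + ε) * K)}
        ≤ ENNReal.ofReal α} := by
  classical
  set c : ℝ := α / ((1 + ε) * K) with hc
  set t : ℝ := (1 + ε) * ((a : ℝ) / ((a : ℝ) + (b : ℝ))) with hts
  rcases le_or_gt 1 δ with hδ1 | hδ1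
  · have h0 : ENNReal.ofReal (1 - δ) = 0 := by
      rw [ENNReal.ofReal_eq_zero]; linarith
    simp [h0]
  · have hKpos : (0:ℝ) < K := by exact_mod_cast hK
    have hK1 : (1:ℝ) ≤ K := by exact_mod_cast hK
    have hK0 : (K:ℝ) ≠ 0 := hKpos.ne'
    have h1ε : (0:ℝ) < 1 + ε := by linarith
    have hδK : δ / K ≤ δ := div_le_self hδ.le hK1
    have h1δK : 0 < 1 - δ / K := by linarith
    have hbne : betaMeasure (a:ℝ) (b:ℝ) ≠ 0 := by
      intro h
      rw [h] at hI
      simp at hI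
      linarith
    -- a ≤ n_cal + 1
    have hale : a ≤ n_cal + 1 := by
      by_contra h
      push_neg at h
      have hb0 : b = 0 := by omega
      apply hbne
      rw [hb0]
      simp [betaMeasure, Real.Gamma_zero]
    have hab : (a:ℝ) + (b:ℝ) = (n_cal:ℝ) + 1 := by
      have h' : a + b = n_cal + 1 := by omega
      exact_mod_cast h'
    have hx : (a:ℝ) ≤ ((n_cal:ℝ) + 1) * c := by
      rw [ha]; exact Int.floor_le _
    have hn1 : (0:ℝ) < (n_cal:ℝ) + 1 := by positivity
    have hKt : (K:ℝ) * t ≤ α := by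
      have key : (1+ε) * (K:ℝ) * (a:ℝ) ≤ ((n_cal:ℝ)+1) * α := by
        have h2 : (1+ε) * (K:ℝ) * (((n_cal:ℝ)+1) * c) = ((n_cal:ℝ)+1) * α := by
          rw [hc]; field_simp
        have h3 := mul_le_mul_of_nonneg_left hx (le_of_lt (mul_pos h1ε hKpos))
        linarith
      rw [hts, hab]
      rw [show (K:ℝ) * ((1+ε) * ((a:ℝ)/((n_cal:ℝ)+1))) = ((1+ε) * (K:ℝ) * (a:ℝ)) / ((n_cal:ℝ)+1) from by ring]
      rw [div_le_iff₀ hn1]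
      nlinarith [key]
    -- measurability
    have hm : ∀ i : Fin K, AEMeasurable (r i) μc := by
      intro i
      by_contra h
      exact hbne ((hbeta i).symm.trans (Measure.map_of_not_aemeasurable h))
    have hmap : ∀ i : Fin K, μc {ω | r i ω ≤ t} = betaMeasure (a:ℝ) (b:ℝ) (Set.Iic t) := by
      intro i
      rw [← hbeta i, Measure.map_apply_of_aemeasurable (hm i) measurableSet_Iic]
      rfl
    have hle1 : betaMeasure (a:ℝ) (b:ℝ) (Set.Iic t) ≤ 1 := by
      rw [← hmap ⟨0, hK⟩]; exact prob_le_one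
    have hne_top : betaMeasure (a:ℝ) (b:ℝ) (Set.Iic t) ≠ ⊤ :=
      (lt_of_le_of_lt hle1 ENNReal.one_lt_top).ne
    have hAi : ∀ i : Fin K, ENNReal.ofReal (1 - δ/K) ≤ μc {ω | r i ω ≤ t} := by
      intro i
      rw [hmap i, ← ENNReal.ofReal_toReal hne_top]
      exact ENNReal.ofReal_le_ofReal hI
    have hbad : ∀ i : Fin K, μc {ω | r i ω ≤ t}ᶜ ≤ ENNReal.ofReal (δ/K) := by
      intro i
      obtain ⟨g, hgm, hgeq⟩ := hm i
      have hseq : {ω | r i ω ≤ t} =ᵐ[μc] {ω | g ω ≤ t} := by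
        rw [Filter.eventuallyEq_set]
        filter_upwards [hgeq] with ω h
        simp [Set.mem_setOf_eq, h]
      have hcongr : μc {ω | r i ω ≤ t} = μc {ω | g ω ≤ t} := measure_congr hseq
      have hcongr' : μc {ω | r i ω ≤ t}ᶜ = μc {ω | g ω ≤ t}ᶜ := measure_congr hseq.compl
      have hms : MeasurableSet {ω | g ω ≤ t} := hgm measurableSet_Iic
      rw [hcongr', measure_compl hms (measure_ne_top _ _), measure_univ]
      have h1 : ENNReal.ofReal (1 - δ/K) ≤ μc {ω | g ω ≤ t} := hcongr ▸ hAi i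
      rw [tsub_le_iff_right]
      calc (1:ℝ≥0∞) = ENNReal.ofReal ((δ/K) + (1 - δ/K)) := by norm_num
        _ = ENNReal.ofReal (δ/K) + ENNReal.ofReal (1-δ/K) :=
            ENNReal.ofReal_add (by positivity) h1δK.le
        _ ≤ ENNReal.ofReal (δ/K) + μc {ω | g ω ≤ t} := add_le_add_right h1 _
    have hBad : μc (⋃ i : Fin K, {ω | r i ω ≤ t}ᶜ) ≤ ENNReal.ofReal δ := by
      calc μc (⋃ i : Fin K, {ω | r i ω ≤ t}ᶜ)
          ≤ ∑' i : Fin K, μc {ω | r i ω ≤ t}ᶜ := measure_iUnion_le _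
        _ ≤ ∑' _i : Fin K, ENNReal.ofReal (δ/K) := ENNReal.tsum_le_tsum hbad
        _ = (K : ℝ≥0∞) * ENNReal.ofReal (δ/K) := by
            rw [tsum_fintype]
            simp [Finset.sum_const, nsmul_eq_mul]
        _ = ENNReal.ofReal δ := by
            rw [← ENNReal.ofReal_natCast K, ← ENNReal.ofReal_mul (Nat.cast_nonneg K)]
            congr 1
            field_simp
    -- good event is contained in the target
    have hGood_sub : {ω | ∀ i : Fin K, r i ω ≤ t} ⊆
        {ω | (κ ω) {x | ∃ i : Fin K, Qhat i ω x ≤ c} ≤ ENNReal.ofReal α} := by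
      intro ω hω
      simp only [Set.mem_setOf_eq] at hω ⊢
      haveI := hκ ω
      calc (κ ω) {x | ∃ i : Fin K, Qhat i ω x ≤ c}
          = (κ ω) (⋃ i : Fin K, {x | Qhat i ω x ≤ c}) := by rw [Set.setOf_exists]
        _ ≤ ∑' i : Fin K, (κ ω) {x | Qhat i ω x ≤ c} := measure_iUnion_le _
        _ ≤ ∑' _i : Fin K, ENNReal.ofReal t := by
            refine ENNReal.tsum_le_tsum fun i => ?_
            rw [← ENNReal.ofReal_toReal (measure_ne_top (κ ω) _)]
            exact ENNReal.ofReal_le_ofReal (by rw [← hr i ω]; exact hω i)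
        _ = (K : ℝ≥0∞) * ENNReal.ofReal t := by
            rw [tsum_fintype]
            simp [Finset.sum_const, nsmul_eq_mul]
        _ = ENNReal.ofReal ((K:ℝ) * t) := by
            rw [← ENNReal.ofReal_natCast K, ← ENNReal.ofReal_mul (Nat.cast_nonneg K)]
        _ ≤ ENNReal.ofReal α := ENNReal.ofReal_le_ofReal hKt
    have hcompl : {ω | ∀ i : Fin K, r i ω ≤ t}ᶜ = ⋃ i : Fin K, {ω | r i ω ≤ t}ᶜ := by
      ext ω
      simp [not_forall]
    have hGc : μc {ω | ∀ i : Fin K, r i ω ≤ t}ᶜ ≤ ENNReal.ofReal δ := by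
      rw [hcompl]; exact hBad
    have h1le : (1:ℝ≥0∞) ≤ μc {ω | ∀ i : Fin K, r i ω ≤ t} + ENNReal.ofReal δ := by
      have hu := measure_union_le (μ := μc)
        {ω | ∀ i : Fin K, r i ω ≤ t} {ω | ∀ i : Fin K, r i ω ≤ t}ᶜ
      rw [Set.union_compl_self, measure_univ] at hu
      exact hu.trans (add_le_add_right hGc _)
    calc ENNReal.ofReal (1 - δ)
        = 1 - ENNReal.ofReal δ := by
          rw [ENNReal.ofReal_sub _ hδ.le, ENNReal.ofReal_one]
      _ ≤ μc {ω | ∀ i : Fin K, r i ω ≤ t} := by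
          rw [tsub_le_iff_right]; exact h1le
      _ ≤ μc {ω | (κ ω) {x | ∃ i : Fin K, Qhat i ω x ≤ c} ≤ ENNReal.ofReal α} :=
          measure_mono hGood_sub
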